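/- The vector field φ̃_h is divergence-free on the cusp region: for every x ∈ Ω_{h,δ} with √(x₁²+x₂²) > 0, one has ∂₁φ̃_h¹(x) + ∂₂φ̃_h²(x) + ∂₃φ̃_h³(x) = 0. -/

import Mathlib

open Real MeasureTheory intervalIntegral

noncomputable section

/-- `γ_s(r) = 1 - √(1 - r²)`. -/
def gam (r : ℝ) : ℝ := 1 - Real.sqrt (1 - r ^ 2)

/-- `α_P(r) = (h + γ_s(r)) / β_Ω`. -/
def aP (βΩ h r : ℝ) : ℝ := (h + gam r) / βΩ

/-- `α_S(r) = (1/β_S + 2) (h + γ_s(r))`. -/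
def aS (βS h r : ℝ) : ℝ := (1 / βS + 2) * (h + gam r)

/-- The cubic `Φ(r,t) = P₁(r) t + P₂(r) t² + P₃(r) t³` of the slip case. -/
def Phi (βS βΩ h r t : ℝ) : ℝ :=
  6 * (2 + aS βS h r) / (12 + 4 * (aS βS h r + aP βΩ h r) + aS βS h r * aP βΩ h r) * t +
  3 * (2 + aS βS h r) * aP βΩ h r / (12 + 4 * (aS βS h r + aP βΩ h r) + aS βS h r * aP βΩ h r) * t ^ 2 +
  -(2 * (aS βS h r + aS βS h r * aP βΩ h r + aP βΩ h r)) / (12 + 4 * (aS βS h r + aP βΩ h r) + aS βS h r * aP βΩ h r) * t ^ 3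

/-- `Ψ(r,z) = Φ(r, z / (h + γ_s(r)))`. -/
def Psi (βS βΩ h r z : ℝ) : ℝ := Phi βS βΩ h r (z / (h + gam r))

/-- Partial derivative in the first (`r`) variable. -/
def dR (f : ℝ → ℝ → ℝ) : ℝ → ℝ → ℝ := fun r z => deriv (fun r' => f r' z) r

/-- Partial derivative in the second (`z`) variable. -/
def dZ (f : ℝ → ℝ → ℝ) : ℝ → ℝ → ℝ := fun r z => deriv (fun z' => f r z') z

/-- `r(x) = √(x₁² + x₂²)`. -/
def rad (x : ℝ × ℝ × ℝ) : ℝ := Real.sqrt (x.1 ^ 2 + x.2.1 ^ 2)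

/-- The cusp region `Ω_{h,δ} = {x : 0 < x₃ < h + γ_s(r), r < δ}`. -/
def Omg (h δ : ℝ) : Set (ℝ × ℝ × ℝ) :=
  {x | 0 < x.2.2 ∧ x.2.2 < h + gam (rad x) ∧ rad x < δ}

/-- First component of the test field `φ̃_h`. -/
def tphi1 (βS βΩ h : ℝ) (x : ℝ × ℝ × ℝ) : ℝ :=
  1 / 2 * (-x.1 * dZ (Psi βS βΩ h) (rad x) x.2.2)

/-- Second component of the test field `φ̃_h`. -/
def tphi2 (βS βΩ h : ℝ) (x : ℝ × ℝ × ℝ) : ℝ :=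
  1 / 2 * (-x.2.1 * dZ (Psi βS βΩ h) (rad x) x.2.2)

/-- Third component of the test field `φ̃_h`: `(1/(2r)) ∂_r[r² Ψ(r,z)]` at `z = x₃`. -/
def tphi3 (βS βΩ h : ℝ) (x : ℝ × ℝ × ℝ) : ℝ :=
  1 / 2 * (1 / rad x * deriv (fun r' => r' ^ 2 * Psi βS βΩ h r' x.2.2) (rad x))

/-- Partial derivative `∂₁` of a function on `ℝ³`. -/
def p1 (f : ℝ × ℝ × ℝ → ℝ) (x : ℝ × ℝ × ℝ) : ℝ := deriv (fun s => f (s, x.2.1, x.2.2)) x.1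

/-- Partial derivative `∂₂` of a function on `ℝ³`. -/
def p2 (f : ℝ × ℝ × ℝ → ℝ) (x : ℝ × ℝ × ℝ) : ℝ := deriv (fun s => f (x.1, s, x.2.2)) x.2.1

/-- Partial derivative `∂₃` of a function on `ℝ³`. -/
def p3 (f : ℝ × ℝ × ℝ → ℝ) (x : ℝ × ℝ × ℝ) : ℝ := deriv (fun s => f (x.1, x.2.1, s)) x.2.2

/- ### Auxiliary definitions and lemmas for the proof -/

/-- Coefficient of `z` in `Ψ(r,z)`, as a function of `r`. -/
def qq1 (βS βΩ h r : ℝ) : ℝ :=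
  6 * (2 + aS βS h r) / (12 + 4 * (aS βS h r + aP βΩ h r) + aS βS h r * aP βΩ h r) /
    (h + gam r)

/-- Coefficient of `z²` in `Ψ(r,z)`, as a function of `r`. -/
def qq2 (βS βΩ h r : ℝ) : ℝ :=
  3 * (2 + aS βS h r) * aP βΩ h r / (12 + 4 * (aS βS h r + aP βΩ h r) + aS βS h r * aP βΩ h r) /
    (h + gam r) ^ 2

/-- Coefficient of `z³` in `Ψ(r,z)`, as a function of `r`. -/
def qq3 (βS βΩ h r : ℝ) : ℝ :=
  -(2 * (aS βS h r + aS βS h r * aP βΩ h r + aP βΩ h r)) /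
    (12 + 4 * (aS βS h r + aP βΩ h r) + aS βS h r * aP βΩ h r) / (h + gam r) ^ 3

lemma gam_nonneg (r : ℝ) : 0 ≤ gam r := by
  have h : Real.sqrt (1 - r ^ 2) ≤ 1 := Real.sqrt_le_one.mpr (by nlinarith [sq_nonneg r])
  unfold gam; linarith

lemma upos (h r : ℝ) (hh : 0 < h) : 0 < h + gam r := by
  have := gam_nonneg r; linarith

/-- `Ψ(r,z)` as a cubic polynomial in `z`. -/
lemma Psi_eq (βS βΩ h r z : ℝ) :
    Psi βS βΩ h r z =
      qq1 βS βΩ h r * z + qq2 βS βΩ h r * z ^ 2 + qq3 βS βΩ h r * z ^ 3 := by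
  unfold Psi Phi qq1 qq2 qq3
  generalize aS βS h r = A
  generalize aP βΩ h r = B
  generalize (h + gam r) = u
  ring

lemma cubic_hasDerivAt (A B C z : ℝ) :
    HasDerivAt (fun s : ℝ => A * s + B * s ^ 2 + C * s ^ 3)
      (A * 1 + B * (2 * z) + C * (3 * z ^ 2)) z := by
  have h2 : HasDerivAt (fun s : ℝ => s ^ 2) (2 * z) z := by simpa using hasDerivAt_pow 2 z
  have h3 : HasDerivAt (fun s : ℝ => s ^ 3) (3 * z ^ 2) z := by simpa using hasDerivAt_pow 3 z
  have h1 : HasDerivAt (fun s : ℝ => s) (1 : ℝ) z := hasDerivAt_id z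
  exact ((h1.const_mul A).add (h2.const_mul B)).add (h3.const_mul C)

/-- `∂_z Ψ` in closed form. -/
lemma dZPsi_eq (βS βΩ h r z : ℝ) :
    dZ (Psi βS βΩ h) r z =
      qq1 βS βΩ h r * 1 + qq2 βS βΩ h r * (2 * z) + qq3 βS βΩ h r * (3 * z ^ 2) := by
  have hfe : (fun z' => Psi βS βΩ h r z') =
      fun z' => qq1 βS βΩ h r * z' + qq2 βS βΩ h r * z' ^ 2 + qq3 βS βΩ h r * z' ^ 3 :=
    funext fun z' => Psi_eq βS βΩ h r z'
  show deriv (fun z' => Psi βS βΩ h r z') z = _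
  rw [hfe]
  exact (cubic_hasDerivAt _ _ _ z).deriv

/-- The test field `φ̃_h` is divergence-free on the cusp region (away from the axis). -/
theorem tphi_divergence_free (δ βS βΩ h : ℝ) (hδ : δ ∈ Set.Ioo (0 : ℝ) (1 / 4))
    (hβS : 0 < βS) (hβΩ : 0 < βΩ) (hh : 0 < h) :
    ∀ x ∈ Omg h δ, 0 < rad x →
      p1 (tphi1 βS βΩ h) x + p2 (tphi2 βS βΩ h) x + p3 (tphi3 βS βΩ h) x = 0 := by
  intro x hx hRpos
  obtain ⟨hz0, hz1, hrδ⟩ := hx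
  simp only [p1, p2, p3, tphi1, tphi2, tphi3, rad] at hRpos hrδ ⊢
  set R : ℝ := Real.sqrt (x.1 ^ 2 + x.2.1 ^ 2) with hRdef
  set z : ℝ := x.2.2 with hzdef
  -- basic facts
  have hxx : x.1 ^ 2 + x.2.1 ^ 2 = R ^ 2 := (Real.sq_sqrt (by positivity)).symm
  have hxxne : x.1 ^ 2 + x.2.1 ^ 2 ≠ 0 := by
    intro hcon
    rw [hRdef, hcon, Real.sqrt_zero] at hRpos
    exact lt_irrefl 0 hRpos
  have hR1 : R < 1 := lt_trans hrδ (lt_trans hδ.2 (by norm_num))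
  have h1R : 0 < 1 - R ^ 2 := by nlinarith
  have hu : 0 < h + gam R := upos h R hh
  have hune : (h + gam R) ≠ 0 := hu.ne'
  -- differentiability of the coefficient functions at R
  have h1s : HasDerivAt (fun t : ℝ => 1 - t ^ 2) (-(2 * R)) R := by
    simpa using (hasDerivAt_pow 2 R).const_sub 1
  have hsd : DifferentiableAt ℝ (fun r' : ℝ => Real.sqrt (1 - r' ^ 2)) R :=
    ((Real.hasDerivAt_sqrt h1R.ne').comp R h1s).differentiableAt
  have hgamd : DifferentiableAt ℝ gam R := by
    show DifferentiableAt ℝ (fun r' : ℝ => 1 - Real.sqrt (1 - r' ^ 2)) R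
    exact hsd.const_sub 1
  have hud : DifferentiableAt ℝ (fun r' : ℝ => h + gam r') R := hgamd.const_add h
  have haS : DifferentiableAt ℝ (aS βS h) R := by
    unfold aS; exact hud.const_mul _
  have haP : DifferentiableAt ℝ (aP βΩ h) R := by
    unfold aP; exact hud.div_const βΩ
  have hD : DifferentiableAt ℝ
      (fun r' => 12 + 4 * (aS βS h r' + aP βΩ h r') + aS βS h r' * aP βΩ h r') R :=
    (((haS.add haP).const_mul 4).const_add 12).add (haS.mul haP)
  have hSpos : 0 < aS βS h R := by
    unfold aS
    have hc : 0 < 1 / βS + 2 := by have := one_div_pos.mpr hβS; linarith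
    exact mul_pos hc hu
  have hPpos : 0 < aP βΩ h R := by
    unfold aP; exact div_pos hu hβΩ
  have hDne : (12 + 4 * (aS βS h R + aP βΩ h R) + aS βS h R * aP βΩ h R) ≠ 0 := by
    have := mul_pos hSpos hPpos
    positivity
  have hq1d : DifferentiableAt ℝ (qq1 βS βΩ h) R := by
    unfold qq1
    exact (((haS.const_add 2).const_mul 6).div hD hDne).div hud hune
  have hq2d : DifferentiableAt ℝ (qq2 βS βΩ h) R := by
    unfold qq2
    exact ((((haS.const_add 2).const_mul 3).mul haP).div hD hDne).div (hud.pow 2)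
      (pow_ne_zero 2 hune)
  have hq3d : DifferentiableAt ℝ (qq3 βS βΩ h) R := by
    unfold qq3
    exact (((((haS.add (haS.mul haP)).add haP).const_mul 2).neg).div hD hDne).div (hud.pow 3)
      (pow_ne_zero 3 hune)
  set e1 : ℝ := deriv (qq1 βS βΩ h) R with he1
  set e2 : ℝ := deriv (qq2 βS βΩ h) R with he2
  set e3 : ℝ := deriv (qq3 βS βΩ h) R with he3
  have hq1' : HasDerivAt (qq1 βS βΩ h) e1 R := hq1d.hasDerivAt
  have hq2' : HasDerivAt (qq2 βS βΩ h) e2 R := hq2d.hasDerivAt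
  have hq3' : HasDerivAt (qq3 βS βΩ h) e3 R := hq3d.hasDerivAt
  -- derivative of s ↦ √(s² + x₂²) at x₁ and of s ↦ √(x₁² + s²) at x₂
  have hin1 : HasDerivAt (fun s : ℝ => s ^ 2 + x.2.1 ^ 2) (2 * x.1) x.1 := by
    simpa using (hasDerivAt_pow 2 x.1).add_const (x.2.1 ^ 2)
  have hin2 : HasDerivAt (fun s : ℝ => x.1 ^ 2 + s ^ 2) (2 * x.2.1) x.2.1 := by
    simpa using (hasDerivAt_pow 2 x.2.1).const_add (x.1 ^ 2)
  have hsq1 : HasDerivAt (fun s : ℝ => Real.sqrt (s ^ 2 + x.2.1 ^ 2)) (x.1 / R) x.1 := by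
    have h0 := (Real.hasDerivAt_sqrt hxxne).comp x.1 hin1
    refine h0.congr_deriv ?_
    rw [← hRdef]
    field_simp
  have hsq2 : HasDerivAt (fun s : ℝ => Real.sqrt (x.1 ^ 2 + s ^ 2)) (x.2.1 / R) x.2.1 := by
    have h0 := (Real.hasDerivAt_sqrt hxxne).comp x.2.1 hin2
    refine h0.congr_deriv ?_
    rw [← hRdef]
    field_simp
  -- rewrite ∂_z Ψ in the first two partials
  simp only [dZPsi_eq]
  -- first partial
  have hc11 : HasDerivAt (fun s : ℝ => qq1 βS βΩ h (Real.sqrt (s ^ 2 + x.2.1 ^ 2)))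
      (e1 * (x.1 / R)) x.1 := by have hcmp := hq1'.comp x.1 hsq1; exact hcmp
  have hc12 : HasDerivAt (fun s : ℝ => qq2 βS βΩ h (Real.sqrt (s ^ 2 + x.2.1 ^ 2)))
      (e2 * (x.1 / R)) x.1 := by have hcmp := hq2'.comp x.1 hsq1; exact hcmp
  have hc13 : HasDerivAt (fun s : ℝ => qq3 βS βΩ h (Real.sqrt (s ^ 2 + x.2.1 ^ 2)))
      (e3 * (x.1 / R)) x.1 := by have hcmp := hq3'.comp x.1 hsq1; exact hcmp
  have hW1 : HasDerivAt (fun s : ℝ =>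
      qq1 βS βΩ h (Real.sqrt (s ^ 2 + x.2.1 ^ 2)) * 1 +
      qq2 βS βΩ h (Real.sqrt (s ^ 2 + x.2.1 ^ 2)) * (2 * z) +
      qq3 βS βΩ h (Real.sqrt (s ^ 2 + x.2.1 ^ 2)) * (3 * z ^ 2))
      (e1 * (x.1 / R) * 1 + e2 * (x.1 / R) * (2 * z) + e3 * (x.1 / R) * (3 * z ^ 2)) x.1 :=
    ((hc11.mul_const 1).add (hc12.mul_const (2 * z))).add (hc13.mul_const (3 * z ^ 2))
  have hT1 : HasDerivAt (fun s : ℝ => 1 / 2 * (-s *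
      (qq1 βS βΩ h (Real.sqrt (s ^ 2 + x.2.1 ^ 2)) * 1 +
       qq2 βS βΩ h (Real.sqrt (s ^ 2 + x.2.1 ^ 2)) * (2 * z) +
       qq3 βS βΩ h (Real.sqrt (s ^ 2 + x.2.1 ^ 2)) * (3 * z ^ 2))))
      (1 / 2 * (-1 *
      (qq1 βS βΩ h R * 1 + qq2 βS βΩ h R * (2 * z) + qq3 βS βΩ h R * (3 * z ^ 2)) +
      -x.1 * (e1 * (x.1 / R) * 1 + e2 * (x.1 / R) * (2 * z) + e3 * (x.1 / R) * (3 * z ^ 2))))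
      x.1 := (((hasDerivAt_id x.1).neg.mul hW1).const_mul (1 / 2))
  -- second partial
  have hc21 : HasDerivAt (fun s : ℝ => qq1 βS βΩ h (Real.sqrt (x.1 ^ 2 + s ^ 2)))
      (e1 * (x.2.1 / R)) x.2.1 := by have hcmp := hq1'.comp x.2.1 hsq2; exact hcmp
  have hc22 : HasDerivAt (fun s : ℝ => qq2 βS βΩ h (Real.sqrt (x.1 ^ 2 + s ^ 2)))
      (e2 * (x.2.1 / R)) x.2.1 := by have hcmp := hq2'.comp x.2.1 hsq2; exact hcmp
  have hc23 : HasDerivAt (fun s : ℝ => qq3 βS βΩ h (Real.sqrt (x.1 ^ 2 + s ^ 2)))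
      (e3 * (x.2.1 / R)) x.2.1 := by have hcmp := hq3'.comp x.2.1 hsq2; exact hcmp
  have hW2 : HasDerivAt (fun s : ℝ =>
      qq1 βS βΩ h (Real.sqrt (x.1 ^ 2 + s ^ 2)) * 1 +
      qq2 βS βΩ h (Real.sqrt (x.1 ^ 2 + s ^ 2)) * (2 * z) +
      qq3 βS βΩ h (Real.sqrt (x.1 ^ 2 + s ^ 2)) * (3 * z ^ 2))
      (e1 * (x.2.1 / R) * 1 + e2 * (x.2.1 / R) * (2 * z) + e3 * (x.2.1 / R) * (3 * z ^ 2))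
      x.2.1 :=
    ((hc21.mul_const 1).add (hc22.mul_const (2 * z))).add (hc23.mul_const (3 * z ^ 2))
  have hT2 : HasDerivAt (fun s : ℝ => 1 / 2 * (-s *
      (qq1 βS βΩ h (Real.sqrt (x.1 ^ 2 + s ^ 2)) * 1 +
       qq2 βS βΩ h (Real.sqrt (x.1 ^ 2 + s ^ 2)) * (2 * z) +
       qq3 βS βΩ h (Real.sqrt (x.1 ^ 2 + s ^ 2)) * (3 * z ^ 2))))
      (1 / 2 * (-1 *
      (qq1 βS βΩ h R * 1 + qq2 βS βΩ h R * (2 * z) + qq3 βS βΩ h R * (3 * z ^ 2)) +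
      -x.2.1 * (e1 * (x.2.1 / R) * 1 + e2 * (x.2.1 / R) * (2 * z) + e3 * (x.2.1 / R) * (3 * z ^ 2))))
      x.2.1 := (((hasDerivAt_id x.2.1).neg.mul hW2).const_mul (1 / 2))
  -- third partial: inner radial derivative in closed form
  have hpow : HasDerivAt (fun y : ℝ => y ^ 2) (2 * R) R := by
    simpa using hasDerivAt_pow 2 R
  have hinner : ∀ s : ℝ, deriv (fun r' => r' ^ 2 * Psi βS βΩ h r' s) R =
      2 * R * (qq1 βS βΩ h R * s + qq2 βS βΩ h R * s ^ 2 + qq3 βS βΩ h R * s ^ 3) +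
      R ^ 2 * (e1 * s + e2 * s ^ 2 + e3 * s ^ 3) := by
    intro s
    have hfe : (fun r' => r' ^ 2 * Psi βS βΩ h r' s) =
        fun r' => r' ^ 2 * (qq1 βS βΩ h r' * s + qq2 βS βΩ h r' * s ^ 2 +
          qq3 βS βΩ h r' * s ^ 3) :=
      funext fun r' => by rw [Psi_eq βS βΩ h r' s]
    rw [hfe]
    have hcub : HasDerivAt (fun r' : ℝ =>
        qq1 βS βΩ h r' * s + qq2 βS βΩ h r' * s ^ 2 + qq3 βS βΩ h r' * s ^ 3)
        (e1 * s + e2 * s ^ 2 + e3 * s ^ 3) R :=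
      ((hq1'.mul_const s).add (hq2'.mul_const (s ^ 2))).add (hq3'.mul_const (s ^ 3))
    exact (hpow.mul hcub).deriv
  have hfun3 : (fun s => 1 / 2 * (1 / R * deriv (fun r' => r' ^ 2 * Psi βS βΩ h r' s) R)) =
      fun s => 1 / 2 * (1 / R *
        (2 * R * (qq1 βS βΩ h R * s + qq2 βS βΩ h R * s ^ 2 + qq3 βS βΩ h R * s ^ 3) +
         R ^ 2 * (e1 * s + e2 * s ^ 2 + e3 * s ^ 3))) :=
    funext fun s => by rw [hinner s]
  rw [hfun3]
  have hT3 : HasDerivAt (fun s : ℝ => 1 / 2 * (1 / R *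
      (2 * R * (qq1 βS βΩ h R * s + qq2 βS βΩ h R * s ^ 2 + qq3 βS βΩ h R * s ^ 3) +
       R ^ 2 * (e1 * s + e2 * s ^ 2 + e3 * s ^ 3))))
      (1 / 2 * (1 / R *
      (2 * R * (qq1 βS βΩ h R * 1 + qq2 βS βΩ h R * (2 * z) + qq3 βS βΩ h R * (3 * z ^ 2)) +
       R ^ 2 * (e1 * 1 + e2 * (2 * z) + e3 * (3 * z ^ 2))))) z :=
    (((cubic_hasDerivAt _ _ _ z).const_mul (2 * R)).add
      ((cubic_hasDerivAt _ _ _ z).const_mul (R ^ 2))).const_mul (1 / R) |>.const_mul (1 / 2)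
  rw [hT1.deriv, hT2.deriv, hT3.deriv]
  have hRne : R ≠ 0 := hRpos.ne'
  field_simp
  linear_combination (-(e1 + e2 * (2 * z) + e3 * (3 * z ^ 2))) * hxx
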